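/- Let p, γ ∈ [0,1] and define the generalized-amplitude-damping Kraus operators K₀ = √p·!![1, 0; 0, √(1−γ)], K₁ = √p·!![0, √γ; 0, 0], K₂ = √(1−p)·!![√(1−γ), 0; 0, 1], K₃ = √(1−p)·!![0, 0; √γ, 0]. Then Σᵢ Kᵢ†Kᵢ = 𝟙, and for the projectors Π± = (1/2)(𝟙 ± Q(Θ,Φ)) one has Σᵢ Kᵢ†Π±Kᵢ = (1/2)((1 ± (2p−1)γ cosΘ)𝟙 ± v·σ) with v = (√(1−γ) sinΘ cosΦ, −√(1−γ) sinΘ sinΦ, (1−γ) cosΘ); in particular the induced POVM has bias of magnitude |(2p−1)γ cosΘ| and sharpness ‖v‖ = √((1−γ)(sin²Θ + (1−γ)cos²Θ)). -/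
import Mathlib


open Matrix

/-- Pauli matrix σ₁. -/
noncomputable def σ1 : Matrix (Fin 2) (Fin 2) ℂ := !![0, 1; 1, 0]
/-- Pauli matrix σ₂. -/
noncomputable def σ2 : Matrix (Fin 2) (Fin 2) ℂ := !![0, -Complex.I; Complex.I, 0]
/-- Pauli matrix σ₃. -/
noncomputable def σ3 : Matrix (Fin 2) (Fin 2) ℂ := !![1, 0; 0, -1]

/-- The three Pauli matrices, indexed. -/
noncomputable def pauli : Fin 3 → Matrix (Fin 2) (Fin 2) ℂ
  | 0 => σ1
  | 1 => σ2
  | 2 => σ3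

/-- `v · σ = v₁σ₁ + v₂σ₂ + v₃σ₃` for `v ∈ ℝ³`. -/
noncomputable def dotσ (v : Fin 3 → ℝ) : Matrix (Fin 2) (Fin 2) ℂ :=
  ∑ i, (v i : ℂ) • pauli i

/-- Euclidean norm of `v ∈ ℝ³`. -/
noncomputable def enorm3 (v : Fin 3 → ℝ) : ℝ := Real.sqrt (v 0 ^ 2 + v 1 ^ 2 + v 2 ^ 2)

/-- The dichotomic observable `Q(Θ,Φ)`. -/
noncomputable def Qobs (Θ Φ : ℝ) : Matrix (Fin 2) (Fin 2) ℂ :=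
  !![(Real.cos Θ : ℂ), Complex.exp (Φ * Complex.I) * (Real.sin Θ : ℂ);
     Complex.exp (-Φ * Complex.I) * (Real.sin Θ : ℂ), -(Real.cos Θ : ℂ)]

/-- The spectral projectors `Π_s = (1/2)(𝟙 + s·Q(Θ,Φ))`, sign `s = ±1`. -/
noncomputable def projQ (Θ Φ s : ℝ) : Matrix (Fin 2) (Fin 2) ℂ :=
  (1/2 : ℂ) • (1 + (s : ℂ) • Qobs Θ Φ)

/-- Kraus operators of the generalized amplitude damping channel. -/
noncomputable def gadK (p γ : ℝ) : Fin 4 → Matrix (Fin 2) (Fin 2) ℂ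
  | 0 => (Real.sqrt p : ℂ) • !![1, 0; 0, (Real.sqrt (1 - γ) : ℂ)]
  | 1 => (Real.sqrt p : ℂ) • !![0, (Real.sqrt γ : ℂ); 0, 0]
  | 2 => (Real.sqrt (1 - p) : ℂ) • !![(Real.sqrt (1 - γ) : ℂ), 0; 0, 1]
  | 3 => (Real.sqrt (1 - p) : ℂ) • !![0, 0; (Real.sqrt γ : ℂ), 0]

/-- The GAD Kraus operators are trace preserving, and the conjugate GAD channel maps `Π±`
to the POVM `(1/2)((1 ± (2p−1)γcosΘ)𝟙 ± v·σ)` with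
`v = (√(1−γ) sinΘ cosΦ, −√(1−γ) sinΘ sinΦ, (1−γ)cosΘ)`, whose bias has magnitude
`|(2p−1)γcosΘ|` and whose sharpness is `√((1−γ)(sin²Θ + (1−γ)cos²Θ))`. -/
theorem stmt13 (p γ : ℝ) (hp : 0 ≤ p ∧ p ≤ 1) (hγ : 0 ≤ γ ∧ γ ≤ 1) (Θ Φ : ℝ) :
    (∑ i, (gadK p γ i)ᴴ * gadK p γ i = 1) ∧
    (∀ s : ℝ, s = 1 ∨ s = -1 →
      ∑ i, (gadK p γ i)ᴴ * projQ Θ Φ s * gadK p γ i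
        = (1/2 : ℂ) • ((((1 + s * ((2*p - 1) * γ * Real.cos Θ) : ℝ)) : ℂ) • 1 + (s : ℂ) •
            dotσ ![Real.sqrt (1 - γ) * Real.sin Θ * Real.cos Φ,
                   -(Real.sqrt (1 - γ) * Real.sin Θ * Real.sin Φ),
                   (1 - γ) * Real.cos Θ])) ∧
    enorm3 ![Real.sqrt (1 - γ) * Real.sin Θ * Real.cos Φ,
             -(Real.sqrt (1 - γ) * Real.sin Θ * Real.sin Φ), (1 - γ) * Real.cos Θ]
      = Real.sqrt ((1 - γ) * (Real.sin Θ ^ 2 + (1 - γ) * Real.cos Θ ^ 2)) := by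
  obtain ⟨hp0, hp1⟩ := hp
  obtain ⟨hγ0, hγ1⟩ := hγ
  have hsp : ((Real.sqrt p : ℝ) : ℂ) ^ 2 = (p : ℂ) := by
    norm_cast; exact Real.sq_sqrt hp0
  have hsp' : ((Real.sqrt (1-p) : ℝ) : ℂ) ^ 2 = 1 - (p : ℂ) := by
    rw [show ((Real.sqrt (1-p) : ℝ) : ℂ) ^ 2 = ((Real.sqrt (1-p) ^ 2 : ℝ) : ℂ) by push_cast; ring,
      Real.sq_sqrt (by linarith : (0:ℝ) ≤ 1 - p)]; push_cast; ring
  have hsg : ((Real.sqrt γ : ℝ) : ℂ) ^ 2 = (γ : ℂ) := by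
    norm_cast; exact Real.sq_sqrt hγ0
  have hsg' : ((Real.sqrt (1-γ) : ℝ) : ℂ) ^ 2 = 1 - (γ : ℂ) := by
    rw [show ((Real.sqrt (1-γ) : ℝ) : ℂ) ^ 2 = ((Real.sqrt (1-γ) ^ 2 : ℝ) : ℂ) by push_cast; ring,
      Real.sq_sqrt (by linarith : (0:ℝ) ≤ 1 - γ)]; push_cast; ring
  have hexp : Complex.exp (-((Φ : ℂ) * Complex.I))
      = Complex.cos (Φ : ℂ) - Complex.sin (Φ : ℂ) * Complex.I := by
    rw [show -((Φ : ℂ) * Complex.I) = (-(Φ : ℂ)) * Complex.I by ring, Complex.exp_mul_I,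
      Complex.cos_neg, Complex.sin_neg]
    ring
  refine ⟨?_, ?_, ?_⟩
  · ext i j
    fin_cases i <;> fin_cases j <;>
      simp [gadK, Fin.sum_univ_four, Matrix.mul_apply, Fin.sum_univ_two, Matrix.one_apply,
        Matrix.conjTranspose_apply] <;>
      push_cast <;>
      ring_nf <;>
      simp only [hsp, hsp', hsg, hsg'] <;>
      ring
  · intro s hs
    ext i j
    fin_cases i <;> fin_cases j <;>
      simp [gadK, projQ, Qobs, dotσ, pauli, σ1, σ2, σ3, Fin.sum_univ_four, Fin.sum_univ_three,
        Matrix.mul_apply, Fin.sum_univ_two, Matrix.one_apply, Matrix.conjTranspose_apply,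
        hexp, Complex.exp_mul_I, ← Complex.ofReal_cos, ← Complex.ofReal_sin] <;>
      push_cast <;>
      ring_nf <;>
      simp only [hsp, hsp', hsg, hsg'] <;>
      ring
  · simp only [enorm3, Matrix.cons_val_zero, Matrix.cons_val_one, Matrix.head_cons,
      Matrix.cons_val_two, Matrix.tail_cons]
    congr 1
    have h1 : Real.sqrt (1-γ) ^ 2 = 1 - γ := Real.sq_sqrt (by linarith)
    have h2 : Real.cos Φ ^ 2 + Real.sin Φ ^ 2 = 1 := by
      rw [add_comm]; exact Real.sin_sq_add_cos_sq Φ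
    linear_combination (Real.sin Θ ^ 2 * (Real.cos Φ ^ 2 + Real.sin Φ ^ 2)) * h1
      + (1 - γ) * Real.sin Θ ^ 2 * h2
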